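/- Let K be an O-category and let α : Φ ⇒ A be an O-colimit of an ω-chain Φ of embeddings (so each α_n is an embedding and ⊔_n α_n ∘ α_n^p = id_A). Then α is a colimiting cocone in K: for every cocone δ : Φ ⇒ D in K there is a unique morphism γ : A → D with γ ∘ α_n = δ_n for all n, and this unique morphism equals ⊔_n δ_n ∘ α_n^p. -/

import Mathlib

open CategoryTheory OmegaCompletePartialOrder

universe v u

class OHom (K : Type u) [Category.{v} K] where
  homOrder : ∀ X Y : K, OmegaCompletePartialOrder (X ⟶ Y)

attribute [instance] OHom.homOrder

/-- An O-category: a category enriched in dcpos with continuous composition. -/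
class OCat (K : Type u) [Category.{v} K] extends OHom K where
  comp_mono : ∀ {X Y Z : K} {f f' : X ⟶ Y} {g g' : Y ⟶ Z},
    f ≤ f' → g ≤ g' → f ≫ g ≤ f' ≫ g'
  comp_cont_left : ∀ {X Y Z : K} (g : Y ⟶ Z) (c : Chain (X ⟶ Y))
    (hm : Monotone fun n => c n ≫ g),
    ωSup c ≫ g = ωSup ⟨fun n => c n ≫ g, hm⟩
  comp_cont_right : ∀ {X Y Z : K} (f : X ⟶ Y) (c : Chain (Y ⟶ Z))
    (hm : Monotone fun n => f ≫ c n),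
    f ≫ ωSup c = ωSup ⟨fun n => f ≫ c n, hm⟩

/-- An O-colimit α : Φ ⇒ A of an ω-chain of embeddings is a colimiting
cocone in K: for every cocone δ : Φ ⇒ D there is a unique mediating morphism
γ : A ⟶ D, and it equals ⊔ₙ δ_n ∘ α_n^p. -/
theorem ocolimit_is_colimit {K : Type u} [Category.{v} K] [OCat K]
    (Φ : ℕ → K) (e : ∀ n, Φ n ⟶ Φ (n + 1)) (ep : ∀ n, Φ (n + 1) ⟶ Φ n)
    (he₁ : ∀ n, e n ≫ ep n = 𝟙 (Φ n)) (he₂ : ∀ n, ep n ≫ e n ≤ 𝟙 (Φ (n + 1)))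
    (A : K) (α : ∀ n, Φ n ⟶ A) (αp : ∀ n, A ⟶ Φ n)
    (hαcocone : ∀ n, e n ≫ α (n + 1) = α n)
    (hα₁ : ∀ n, α n ≫ αp n = 𝟙 (Φ n)) (hα₂ : ∀ n, αp n ≫ α n ≤ 𝟙 A)
    (hαmono : Monotone fun n => αp n ≫ α n)
    (hαsup : ωSup ⟨fun n => αp n ≫ α n, hαmono⟩ = 𝟙 A)
    (D : K) (δ : ∀ n, Φ n ⟶ D) (hδcocone : ∀ n, e n ≫ δ (n + 1) = δ n) :
    ∃ hm : Monotone fun n => αp n ≫ δ n,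
      (∀ n, α n ≫ ωSup ⟨fun n => αp n ≫ δ n, hm⟩ = δ n) ∧
      (∀ γ : A ⟶ D, (∀ n, α n ≫ γ = δ n) → γ = ωSup ⟨fun n => αp n ≫ δ n, hm⟩) := by
  -- factorization through later stages
  have G : ∀ n m, n ≤ m → ∃ f : Φ n ⟶ Φ m, α n = f ≫ α m ∧ δ n = f ≫ δ m := by
    intro n m h
    induction m, h using Nat.le_induction with
    | base => exact ⟨𝟙 _, by simp, by simp⟩
    | succ m hnm ih =>
      obtain ⟨f, h1, h2⟩ := ih
      exact ⟨f ≫ e m, by rw [Category.assoc, hαcocone, h1],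
        by rw [Category.assoc, hδcocone, h2]⟩
  have hstep : ∀ n, αp n ≫ e n ≤ αp (n + 1) := by
    intro n
    have : αp n ≫ e n = (αp n ≫ α n) ≫ αp (n + 1) := by
      rw [Category.assoc, ← hαcocone n, Category.assoc, hα₁, Category.comp_id]
    rw [this]
    calc (αp n ≫ α n) ≫ αp (n + 1) ≤ 𝟙 A ≫ αp (n + 1) :=
          OCat.comp_mono (hα₂ n) le_rfl
      _ = αp (n + 1) := Category.id_comp _
  have hm : Monotone fun n => αp n ≫ δ n := by
    apply monotone_nat_of_le_succ
    intro n
    rw [← hδcocone n, ← Category.assoc]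
    exact OCat.comp_mono (hstep n) le_rfl
  have key : ∀ n m, n ≤ m → α n ≫ (αp m ≫ δ m) = δ n := by
    intro n m h
    obtain ⟨f, h1, h2⟩ := G n m h
    rw [h1, h2, Category.assoc, ← Category.assoc (α m), hα₁, Category.id_comp]
  refine ⟨hm, ?_, ?_⟩
  · intro n
    have hm' : Monotone fun m => α n ≫ (αp m ≫ δ m) :=
      fun a b hab => OCat.comp_mono le_rfl (hm hab)
    rw [OCat.comp_cont_right (α n) ⟨fun m => αp m ≫ δ m, hm⟩ hm']
    apply le_antisymm
    · apply ωSup_le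
      intro m
      calc α n ≫ (αp m ≫ δ m) ≤ α n ≫ (αp (max m n) ≫ δ (max m n)) :=
            hm' (le_max_left m n)
        _ = δ n := key n (max m n) (le_max_right m n)
    · have := le_ωSup (⟨fun m => α n ≫ (αp m ≫ δ m), hm'⟩ : Chain (Φ n ⟶ D)) n
      rwa [show (⟨fun m => α n ≫ (αp m ≫ δ m), hm'⟩ : Chain (Φ n ⟶ D)) n
        = δ n from key n n le_rfl] at this
  · intro γ hγ
    have hm'' : Monotone fun n => (αp n ≫ α n) ≫ γ :=
      fun a b hab => OCat.comp_mono (hαmono hab) le_rfl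
    calc γ = 𝟙 A ≫ γ := (Category.id_comp γ).symm
      _ = ωSup ⟨fun n => αp n ≫ α n, hαmono⟩ ≫ γ := by rw [hαsup]
      _ = ωSup ⟨fun n => (αp n ≫ α n) ≫ γ, hm''⟩ :=
          OCat.comp_cont_left γ ⟨fun n => αp n ≫ α n, hαmono⟩ hm''
      _ = ωSup ⟨fun n => αp n ≫ δ n, hm⟩ := by
          congr 1
          apply Chain.ext
          funext n
          show (αp n ≫ α n) ≫ γ = αp n ≫ δ n
          rw [Category.assoc, hγ n]
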